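/- Let ξ ∈ ℚ_p and let c_0, c_1, c_2, c_3, θ, ρ, δ be positive real numbers. Let (β_j)_{j≥1} be a sequence of positive integers with β_j < β_{j+1} ≤ c_0 β_j^θ for all j, and let (α_j)_{j≥1} be a sequence of distinct rational numbers such that c_1 β_j^{−1−ρ} ≤ |ξ − α_j|_p ≤ c_2 β_j^{−1−δ} and H(α_j) ≤ c_3 β_j for all j ≥ 1. Then δ ≤ w_1(ξ) ≤ (1+ρ)θ/δ − 1. -/

import Mathlib

/-- The naive height of a rational number. -/
def ratHeight (q : ℚ) : ℕ := max q.num.natAbs q.den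

/-- The set of good rational approximations to `ξ` of exponent `w`;
`w₁(ξ) ≥ c` iff this set is infinite for every `w < c`, and `w₁(ξ) ≤ c` iff it is
finite for every `w > c`. -/
def approxSet {p : ℕ} [Fact p.Prime] (ξ : ℚ_[p]) (w : ℝ) : Set ℚ :=
  {α | 0 < ‖ξ - (α : ℚ_[p])‖ ∧ ‖ξ - (α : ℚ_[p])‖ ≤ (ratHeight α : ℝ) ^ (-(w + 1))}

lemma one_le_ratHeight (q : ℚ) : (1:ℝ) ≤ (ratHeight q : ℝ) := by
  have : 1 ≤ ratHeight q := le_max_of_le_right q.pos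
  exact_mod_cast this

lemma int_norm_lb (p : ℕ) [hp : Fact p.Prime] (z : ℤ) (hz : z ≠ 0) :
    ((z.natAbs : ℝ))⁻¹ ≤ ‖(z : ℚ_[p])‖ := by
  have h1 : ‖(z : ℚ_[p])‖ = ((padicNorm p (z : ℚ) : ℚ) : ℝ) := by
    rw [← Padic.eq_padicNorm]; norm_cast
  have hz' : (z : ℚ) ≠ 0 := by exact_mod_cast hz
  have h2 : padicNorm p (z : ℚ) = (p : ℚ) ^ (-(padicValRat p (z : ℚ))) :=
    padicNorm.eq_zpow_of_nonzero hz'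
  have h3 : padicValRat p (z : ℚ) = (padicValInt p z : ℤ) := padicValRat.of_int
  have hdvd : (p : ℤ) ^ padicValInt p z ∣ z := padicValInt_dvd z
  have hle : (p : ℤ) ^ padicValInt p z ≤ |z| := Int.le_of_dvd (abs_pos.mpr hz) ((dvd_abs _ _).mpr hdvd)
  have hp1 : (0:ℚ) < (p:ℚ) := by exact_mod_cast hp.out.pos
  have hppos : (0:ℚ) < (p:ℚ) ^ (padicValInt p z : ℕ) := pow_pos hp1 _
  have key : padicNorm p (z:ℚ) = ((p:ℚ) ^ (padicValInt p z : ℕ))⁻¹ := by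
    rw [h2, h3, zpow_neg, zpow_natCast]
  have hle' : ((p:ℚ) ^ (padicValInt p z : ℕ)) ≤ (z.natAbs : ℚ) := by
    have : ((p:ℤ) ^ padicValInt p z : ℤ) ≤ (z.natAbs : ℤ) := by
      rwa [Int.abs_eq_natAbs] at hle
    exact_mod_cast this
  have habs : ((z.natAbs : ℚ))⁻¹ ≤ padicNorm p (z:ℚ) := by
    rw [key]
    exact inv_anti₀ hppos hle'
  rw [h1]
  have := (Rat.cast_le (K := ℝ)).mpr habs
  simpa using this

lemma sep_lemma (p : ℕ) [hp : Fact p.Prime] (r s : ℚ) (h : r ≠ s) :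
    ((2 * ratHeight r * ratHeight s : ℝ))⁻¹ ≤ ‖(r : ℚ_[p]) - s‖ := by
  set A : ℤ := r.num * s.den - s.num * r.den with hA
  have hrd : (r.den : ℚ) ≠ 0 := by exact_mod_cast r.den_nz
  have hsd : (s.den : ℚ) ≠ 0 := by exact_mod_cast s.den_nz
  have hr := Rat.num_div_den r
  have hs := Rat.num_div_den s
  rw [div_eq_iff hrd] at hr
  rw [div_eq_iff hsd] at hs
  have key : r - s = (A : ℚ) / ((r.den : ℚ) * s.den) := by
    rw [eq_div_iff (by exact mul_ne_zero hrd hsd)]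
    push_cast [hA]
    linear_combination (-(s.den : ℚ)) * hr + (r.den : ℚ) * hs
  have hAne : A ≠ 0 := by
    intro h0
    apply h
    have h1 : r - s = 0 := by rw [key, h0]; simp
    linarith [h1]
  have cast_eq : (r : ℚ_[p]) - s = (A : ℚ_[p]) / (((r.den * s.den : ℕ) : ℚ_[p])) := by
    have := congrArg (fun q : ℚ => (q : ℚ_[p])) key
    push_cast at this ⊢
    convert this using 2
  have hdenne : ((r.den * s.den : ℕ) : ℚ_[p]) ≠ 0 := by
    have : (r.den * s.den : ℕ) ≠ 0 := by positivity
    exact_mod_cast this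
  have hnorm : ‖(A : ℚ_[p])‖ ≤ ‖(r : ℚ_[p]) - s‖ := by
    rw [cast_eq, norm_div]
    have h1 : ‖((r.den * s.den : ℕ) : ℚ_[p])‖ ≤ 1 := by
      have := Padic.norm_int_le_one (p := p) ((r.den * s.den : ℕ) : ℤ)
      push_cast at this ⊢
      exact this
    have h2 : 0 < ‖((r.den * s.den : ℕ) : ℚ_[p])‖ := norm_pos_iff.mpr hdenne
    rw [le_div_iff₀ h2]
    calc ‖(A : ℚ_[p])‖ * ‖((r.den * s.den : ℕ) : ℚ_[p])‖
        ≤ ‖(A : ℚ_[p])‖ * 1 := by gcongr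
      _ = ‖(A : ℚ_[p])‖ := mul_one _
  have h1 : (r.num.natAbs : ℝ) ≤ ratHeight r := by exact_mod_cast le_max_left _ _
  have h2 : (r.den : ℝ) ≤ ratHeight r := by exact_mod_cast le_max_right _ _
  have h3 : (s.num.natAbs : ℝ) ≤ ratHeight s := by exact_mod_cast le_max_left _ _
  have h4 : (s.den : ℝ) ≤ ratHeight s := by exact_mod_cast le_max_right _ _
  have hrn : |(r.num:ℝ)| = (r.num.natAbs : ℝ) := by rw [Nat.cast_natAbs]; norm_cast
  have hsn : |(s.num:ℝ)| = (s.num.natAbs : ℝ) := by rw [Nat.cast_natAbs]; norm_cast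
  have hAabs : (A.natAbs : ℝ) = |(A:ℝ)| := by rw [Nat.cast_natAbs]; norm_cast
  have hbound : (A.natAbs : ℝ) ≤ 2 * ratHeight r * ratHeight s := by
    rw [hAabs]
    have habs2 : |(A:ℝ)| ≤ |(r.num:ℝ)| * s.den + |(s.num:ℝ)| * r.den := by
      have : ((A:ℤ):ℝ) = (r.num:ℝ) * s.den - (s.num:ℝ) * r.den := by push_cast [hA]; ring
      rw [this]
      calc |(r.num:ℝ) * s.den - (s.num:ℝ) * r.den|
          ≤ |(r.num:ℝ) * (s.den:ℝ)| + |(s.num:ℝ) * (r.den:ℝ)| := abs_sub _ _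
        _ = |(r.num:ℝ)| * s.den + |(s.num:ℝ)| * r.den := by
            rw [abs_mul, abs_mul, abs_of_nonneg (by positivity : (0:ℝ) ≤ (s.den:ℝ)),
              abs_of_nonneg (by positivity : (0:ℝ) ≤ (r.den:ℝ))]
    calc |(A:ℝ)| ≤ |(r.num:ℝ)| * s.den + |(s.num:ℝ)| * r.den := habs2
      _ ≤ (ratHeight r : ℝ) * ratHeight s + (ratHeight s : ℝ) * ratHeight r := by
          rw [hrn, hsn]
          exact add_le_add (mul_le_mul h1 h4 (by positivity) (by positivity))
            (mul_le_mul h3 h2 (by positivity) (by positivity))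
      _ = 2 * ratHeight r * ratHeight s := by ring
  have hApos : (0:ℝ) < (A.natAbs : ℝ) := by
    have : A.natAbs ≠ 0 := Int.natAbs_ne_zero.mpr hAne
    positivity
  calc ((2 * ratHeight r * ratHeight s : ℝ))⁻¹ ≤ ((A.natAbs : ℝ))⁻¹ := inv_anti₀ hApos hbound
    _ ≤ ‖(A : ℚ_[p])‖ := int_norm_lb p A hAne
    _ ≤ ‖(r : ℚ_[p]) - s‖ := hnorm

lemma finite_height_le (X : ℝ) : {q : ℚ | (ratHeight q : ℝ) ≤ X}.Finite := by
  obtain ⟨N, hN⟩ := exists_nat_ge X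
  apply Set.Finite.subset (Set.Finite.image (fun z : ℤ × ℕ => (z.1 : ℚ) / z.2)
    ((Set.finite_Icc (-(N:ℤ)) N).prod (Set.finite_Iic N)))
  intro q hq
  have hq' : (ratHeight q : ℝ) ≤ N := le_trans hq hN
  have hq'' : ratHeight q ≤ N := by exact_mod_cast hq'
  have h1 : q.num.natAbs ≤ N := le_trans (le_max_left _ _) hq''
  have h2 : q.den ≤ N := le_trans (le_max_right _ _) hq''
  refine ⟨(q.num, q.den), ⟨?_, h2⟩, by simp [Rat.num_div_den]⟩
  simp only [Set.mem_Icc]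
  constructor <;> omega

/-- ultrametric bound for differences through a common point -/
lemma diff_le_max (p : ℕ) [Fact p.Prime] (ξ : ℚ_[p]) (x y : ℚ_[p]) :
    ‖x - y‖ ≤ max ‖ξ - x‖ ‖ξ - y‖ := by
  have h : x - y = (ξ - y) + (-(ξ - x)) := by ring
  rw [h]
  calc ‖(ξ - y) + (-(ξ - x))‖ ≤ max ‖ξ - y‖ ‖-(ξ - x)‖ := Padic.nonarchimedean _ _
    _ = max ‖ξ - y‖ ‖ξ - x‖ := by rw [norm_neg]
    _ ≤ max ‖ξ - x‖ ‖ξ - y‖ := by rw [max_comm]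

theorem w_one_bounds_of_approx_sequence
    (p : ℕ) [Fact p.Prime] (ξ : ℚ_[p]) (c₀ c₁ c₂ c₃ θ ρ δ : ℝ)
    (hc₀ : 0 < c₀) (hc₁ : 0 < c₁) (hc₂ : 0 < c₂) (hc₃ : 0 < c₃)
    (hθ : 0 < θ) (hρ : 0 < ρ) (hδ : 0 < δ)
    (β : ℕ → ℕ) (hβpos : ∀ j, 0 < β j)
    (hβmono : ∀ j, β j < β (j + 1))
    (hβgrow : ∀ j, (β (j + 1) : ℝ) ≤ c₀ * (β j : ℝ) ^ θ)
    (α : ℕ → ℚ) (hinj : Function.Injective α)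
    (hlow : ∀ j, c₁ * (β j : ℝ) ^ (-(1 + ρ)) ≤ ‖ξ - (α j : ℚ_[p])‖)
    (hup : ∀ j, ‖ξ - (α j : ℚ_[p])‖ ≤ c₂ * (β j : ℝ) ^ (-(1 + δ)))
    (hH : ∀ j, (ratHeight (α j) : ℝ) ≤ c₃ * β j) :
    (∀ w : ℝ, w < δ → (approxSet ξ w).Infinite) ∧
    (∀ w : ℝ, (1 + ρ) * θ / δ - 1 < w → (approxSet ξ w).Finite) := by
  have hβR : ∀ j, (0:ℝ) < β j := fun j => by exact_mod_cast hβpos j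
  have hβ1 : ∀ j, (1:ℝ) ≤ β j := fun j => by exact_mod_cast hβpos j
  have sm : StrictMono β := strictMono_nat_of_lt_succ hβmono
  have hjβ : ∀ j : ℕ, (j:ℝ) ≤ (β j : ℝ) := fun j => by exact_mod_cast sm.le_apply
  have hD0 : ∀ j, 0 < ‖ξ - (α j : ℚ_[p])‖ :=
    fun j => lt_of_lt_of_le (mul_pos hc₁ (Real.rpow_pos_of_pos (hβR j) _)) (hlow j)
  have hHpos : ∀ q : ℚ, (0:ℝ) < (ratHeight q : ℝ) :=
    fun q => lt_of_lt_of_le one_pos (one_le_ratHeight q)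
  have lb0 : ∀ j, 0 ≤ Real.log (β j) := fun j => Real.log_nonneg (hβ1 j)
  have lbmono : ∀ {j k}, j ≤ k → Real.log (β j) ≤ Real.log (β k) := by
    intro j k h
    exact (Real.log_le_log_iff (hβR j) (hβR k)).mpr (by exact_mod_cast sm.monotone h)
  -- logarithmic versions of the hypotheses
  have llow : ∀ j, Real.log c₁ - (1 + ρ) * Real.log (β j) ≤ Real.log ‖ξ - (α j : ℚ_[p])‖ := by
    intro j
    have h := (Real.log_le_log_iff (mul_pos hc₁ (Real.rpow_pos_of_pos (hβR j) _)) (hD0 j)).mpr (hlow j)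
    rw [Real.log_mul (ne_of_gt hc₁) (ne_of_gt (Real.rpow_pos_of_pos (hβR j) _)),
      Real.log_rpow (hβR j)] at h
    linarith
  have lup : ∀ j, Real.log ‖ξ - (α j : ℚ_[p])‖ ≤ Real.log c₂ - (1 + δ) * Real.log (β j) := by
    intro j
    have h := (Real.log_le_log_iff (hD0 j) (mul_pos hc₂ (Real.rpow_pos_of_pos (hβR j) _))).mpr (hup j)
    rw [Real.log_mul (ne_of_gt hc₂) (ne_of_gt (Real.rpow_pos_of_pos (hβR j) _)),
      Real.log_rpow (hβR j)] at h
    linarith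
  have lH : ∀ j, Real.log (ratHeight (α j)) ≤ Real.log c₃ + Real.log (β j) := by
    intro j
    have h := (Real.log_le_log_iff (hHpos _) (mul_pos hc₃ (hβR j))).mpr (hH j)
    rwa [Real.log_mul (ne_of_gt hc₃) (ne_of_gt (hβR j))] at h
  have lgrow : ∀ j, Real.log (β (j+1)) ≤ Real.log c₀ + θ * Real.log (β j) := by
    intro j
    have h := (Real.log_le_log_iff (hβR (j+1)) (mul_pos hc₀ (Real.rpow_pos_of_pos (hβR j) _))).mpr (hβgrow j)
    rwa [Real.log_mul (ne_of_gt hc₀) (ne_of_gt (Real.rpow_pos_of_pos (hβR j) _)),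
      Real.log_rpow (hβR j)] at h
  have lHnn : ∀ j, 0 ≤ Real.log (ratHeight (α j)) := fun j => Real.log_nonneg (one_le_ratHeight _)
  constructor
  · -- Part 1 : w < δ ⇒ infinite
    intro w hw
    set w₀ := max w 0 with hw₀
    have hw₀0 : 0 ≤ w₀ := le_max_right _ _
    have hw₀δ : w₀ < δ := max_lt hw hδ
    have hww₀ : w ≤ w₀ := le_max_left _ _
    have hsub : approxSet ξ w₀ ⊆ approxSet ξ w := by
      intro q hq
      refine ⟨hq.1, hq.2.trans ?_⟩
      exact Real.rpow_le_rpow_of_exponent_le (one_le_ratHeight q) (by linarith)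
    apply Set.Infinite.mono hsub
    obtain ⟨J, hJ⟩ := exists_nat_ge
      (Real.exp ((Real.log c₂ + (w₀ + 1) * Real.log c₃) / (δ - w₀)))
    apply Set.infinite_of_injective_forall_mem (f := fun n : ℕ => α (n + J))
      (fun a b hab => by simpa using hinj hab)
    intro n
    set j := n + J with hj
    refine ⟨hD0 j, ?_⟩
    have hHj := hHpos (α j)
    have hrp : (0:ℝ) < (ratHeight (α j) : ℝ) ^ (-(w₀ + 1)) := Real.rpow_pos_of_pos hHj _
    rw [← Real.log_le_log_iff (hD0 j) hrp, Real.log_rpow hHj]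
    -- key numeric bound
    have hβJ : (J:ℝ) ≤ β j := le_trans (by exact_mod_cast Nat.le_add_left J n) (hjβ j)
    have hlbj : (Real.log c₂ + (w₀ + 1) * Real.log c₃) / (δ - w₀) ≤ Real.log (β j) := by
      have h1 : Real.exp ((Real.log c₂ + (w₀ + 1) * Real.log c₃) / (δ - w₀)) ≤ β j :=
        le_trans hJ hβJ
      have := (Real.log_le_log_iff (Real.exp_pos _) (hβR j)).mpr h1
      rwa [Real.log_exp] at this
    have he2 : Real.log c₂ + (w₀ + 1) * Real.log c₃ ≤ (δ - w₀) * Real.log (β j) := by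
      rw [div_le_iff₀ (by linarith : (0:ℝ) < δ - w₀)] at hlbj
      linarith
    have he1 : (w₀ + 1) * Real.log (ratHeight (α j)) ≤ (w₀ + 1) * (Real.log c₃ + Real.log (β j)) :=
      mul_le_mul_of_nonneg_left (lH j) (by linarith)
    have := lup j
    nlinarith [this, he1, he2]
  · -- Part 2 : w > (1+ρ)θ/δ - 1 ⇒ finite
    intro w hw
    have hrtd : (0:ℝ) < (1 + ρ) * θ / δ := by positivity
    have hw1 : (0:ℝ) < w + 1 := by linarith
    have he₁ : (0:ℝ) < δ * (w + 1) - (1 + ρ) * θ := by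
      have h := (div_lt_iff₀ hδ).mp (by linarith : (1 + ρ) * θ / δ < w + 1)
      nlinarith
    -- membership in log form
    have lmem : ∀ q : ℚ, q ∈ approxSet ξ w →
        Real.log ‖ξ - (q : ℚ_[p])‖ ≤ -(w + 1) * Real.log (ratHeight q) := by
      intro q hq
      have := (Real.log_le_log_iff hq.1 (Real.rpow_pos_of_pos (hHpos q) _)).mpr hq.2
      rwa [Real.log_rpow (hHpos q)] at this
    -- log form of the separation lemma
    have lsep : ∀ r s : ℚ, r ≠ s →
        -(Real.log 2 + Real.log (ratHeight r) + Real.log (ratHeight s))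
          ≤ Real.log ‖(r : ℚ_[p]) - s‖ := by
      intro r s hrs
      have hpos : (0:ℝ) < ((2 * ratHeight r * ratHeight s : ℝ))⁻¹ := by
        have := hHpos r; have := hHpos s; positivity
      have hne : ((r : ℚ_[p]) - s) ≠ 0 := by
        intro h0
        apply hrs
        have : ((r : ℚ) : ℚ_[p]) = ((s : ℚ) : ℚ_[p]) := by
          have := sub_eq_zero.mp h0; exact_mod_cast this
        exact_mod_cast this
      have hnpos : 0 < ‖(r : ℚ_[p]) - s‖ := norm_pos_iff.mpr hne
      have h := (Real.log_le_log_iff hpos hnpos).mpr (sep_lemma p r s hrs)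
      rw [Real.log_inv, Real.log_mul (ne_of_gt (mul_pos two_pos (hHpos r))) (ne_of_gt (hHpos s)),
        Real.log_mul (by norm_num) (ne_of_gt (hHpos r))] at h
      linarith
    -- the set of indices whose α_k is a good approximation is finite
    set K : Set ℕ := {k : ℕ | α k ∈ approxSet ξ w} with hK
    have hKfin : K.Finite := by
      set L₂ : ℝ := Real.log 2 + Real.log c₂ + Real.log c₃ with hL₂
      set C : ℝ := (w + 1) * (δ * Real.log c₀ + θ * L₂) - θ * Real.log c₁ with hC
      set R : ℝ := Real.exp (C / (δ * (w + 1) - (1 + ρ) * θ)) with hR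
      apply Set.Finite.subset ((Set.finite_Iic ⌈R⌉₊).union (Set.finite_singleton 0))
      intro k hk
      match k with
      | 0 => exact Or.inr rfl
      | (m+1) =>
        left
        simp only [Set.mem_Iic]
        have hk' : α (m+1) ∈ approxSet ξ w := hk
        have f3 := lmem _ hk'
        have f3' := llow (m+1)
        have s3 : (w+1) * Real.log (ratHeight (α (m+1)))
            ≤ (1+ρ) * Real.log (β (m+1)) - Real.log c₁ := by linarith only [f3, f3']
        have hne : α m ≠ α (m+1) := fun h => by have := hinj h; omega
        have g0 := lsep (α m) (α (m+1)) hne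
        have hkm : c₂ * (β (m+1):ℝ) ^ (-(1+δ)) ≤ c₂ * (β m:ℝ) ^ (-(1+δ)) := by
          apply mul_le_mul_of_nonneg_left _ hc₂.le
          exact Real.rpow_le_rpow_of_nonpos (hβR m)
            (by exact_mod_cast (sm.monotone (Nat.le_succ m))) (by linarith)
        have hd : ‖(α m : ℚ_[p]) - α (m+1)‖ ≤ c₂ * (β m:ℝ) ^ (-(1+δ)) :=
          le_trans (diff_le_max p ξ _ _)
            (max_le (hup m) (le_trans (hup (m+1)) hkm))
        have hdpos : 0 < ‖(α m : ℚ_[p]) - α (m+1)‖ := by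
          apply norm_pos_iff.mpr
          intro h0
          exact hne (by exact_mod_cast sub_eq_zero.mp h0)
        have g1 : Real.log ‖(α m : ℚ_[p]) - α (m+1)‖
            ≤ Real.log c₂ - (1+δ) * Real.log (β m) := by
          have := (Real.log_le_log_iff hdpos
            (mul_pos hc₂ (Real.rpow_pos_of_pos (hβR m) _))).mpr hd
          rw [Real.log_mul (ne_of_gt hc₂)
            (ne_of_gt (Real.rpow_pos_of_pos (hβR m) _)), Real.log_rpow (hβR m)] at this
          linarith only [this]
        have g1' : δ * Real.log (β m) ≤ L₂ + Real.log (ratHeight (α (m+1))) := by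
          rw [hL₂]
          linarith only [g0, g1, lH m]
        have f2 := lgrow m
        have s1 := mul_le_mul_of_nonneg_left f2 hδ.le
        have s2 := mul_le_mul_of_nonneg_left g1' hθ.le
        have sA : δ * Real.log (β (m+1))
            ≤ δ * Real.log c₀ + θ * L₂ + θ * Real.log (ratHeight (α (m+1))) := by
          linarith only [s1, s2]
        have s4 := mul_le_mul_of_nonneg_left sA hw1.le
        have s5 := mul_le_mul_of_nonneg_left s3 hθ.le
        have hfinal : (δ * (w+1) - (1+ρ) * θ) * Real.log (β (m+1)) ≤ C := by
          rw [hC]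
          linarith only [s4, s5]
        have hlb : Real.log (β (m+1)) ≤ C / (δ * (w+1) - (1+ρ) * θ) :=
          (le_div_iff₀ he₁).mpr (by linarith only [hfinal])
        have hkR : (β (m+1) : ℝ) ≤ R := by
          rw [hR]
          exact (Real.log_le_iff_le_exp (hβR _)).mp hlb
        have : ((m+1:ℕ):ℝ) ≤ (⌈R⌉₊ : ℝ) := le_trans (le_trans (hjβ (m+1)) hkR) (Nat.le_ceil R)
        exact_mod_cast this
    have hAfin : (approxSet ξ w ∩ Set.range α).Finite := by
      apply Set.Finite.subset (hKfin.image α)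
      rintro x ⟨hx, k, rfl⟩
      exact ⟨k, hx, rfl⟩
    have hBfin : (approxSet ξ w \ Set.range α).Finite := by
      set L₂ : ℝ := Real.log 2 + Real.log c₂ + Real.log c₃ with hL₂
      set X₁ : ℝ := Real.exp (((1+ρ) * Real.log (β 0) - Real.log c₁) / (w+1)) with hX₁
      set C₂ : ℝ := ((1+ρ) * θ * L₂ - δ * Real.log c₁ + δ * (1+ρ) * Real.log c₀)
        / (δ * (w+1) - (1+ρ) * θ) with hC₂
      apply Set.Finite.subset (finite_height_le (max X₁ (Real.exp C₂)))
      rintro q ⟨hq, hnr⟩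
      simp only [Set.mem_setOf_eq]
      by_cases hcase : (ratHeight q : ℝ) ≤ X₁
      · exact le_trans hcase (le_max_left _ _)
      push_neg at hcase
      refine le_trans ?_ (le_max_right _ _)
      have hDq : 0 < ‖ξ - (q:ℚ_[p])‖ := hq.1
      have hmem := lmem q hq
      have hex : ∃ j, ‖ξ - (α j:ℚ_[p])‖ < ‖ξ - (q:ℚ_[p])‖ := by
        obtain ⟨n, hn⟩ := exists_nat_gt
          (Real.exp ((Real.log c₂ - Real.log ‖ξ - (q:ℚ_[p])‖) / (1+δ)))
        refine ⟨n, lt_of_le_of_lt (hup n) ?_⟩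
        have h1 : Real.exp ((Real.log c₂ - Real.log ‖ξ - (q:ℚ_[p])‖) / (1+δ)) < β n :=
          lt_of_lt_of_le hn (hjβ n)
        have h2 : (Real.log c₂ - Real.log ‖ξ - (q:ℚ_[p])‖) / (1+δ) < Real.log (β n) := by
          have := Real.log_lt_log (Real.exp_pos _) h1
          rwa [Real.log_exp] at this
        rw [← Real.log_lt_log_iff (mul_pos hc₂ (Real.rpow_pos_of_pos (hβR n) _)) hDq,
          Real.log_mul (ne_of_gt hc₂) (ne_of_gt (Real.rpow_pos_of_pos (hβR n) _)),
          Real.log_rpow (hβR n)]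
        rw [div_lt_iff₀ (by linarith : (0:ℝ) < 1+δ)] at h2
        linarith only [h2]
      classical
      have hspec : ‖ξ - (α (Nat.find hex):ℚ_[p])‖ < ‖ξ - (q:ℚ_[p])‖ := Nat.find_spec hex
      have hj₀ne : Nat.find hex ≠ 0 := by
        intro h0
        rw [h0] at hspec
        have hlogH : ((1+ρ) * Real.log (β 0) - Real.log c₁) / (w+1)
            < Real.log (ratHeight q) := by
          have := Real.log_lt_log (Real.exp_pos _) hcase
          rwa [Real.log_exp] at this
        rw [div_lt_iff₀ hw1] at hlogH
        have hd0 : Real.log ‖ξ - (q:ℚ_[p])‖ < Real.log ‖ξ - (α 0:ℚ_[p])‖ := by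
          linarith only [llow 0, hmem, hlogH]
        have := (Real.log_lt_log_iff hDq (hD0 0)).mp hd0
        linarith only [this, hspec]
      obtain ⟨m, hm⟩ : ∃ m, Nat.find hex = m + 1 := ⟨Nat.find hex - 1, by omega⟩
      rw [hm] at hspec
      have hDm : ‖ξ - (q:ℚ_[p])‖ ≤ ‖ξ - (α m:ℚ_[p])‖ :=
        le_of_not_gt (Nat.find_min hex (by omega))
      have hqne : q ≠ α m := fun h => hnr ⟨m, h.symm⟩
      have hdmax : ‖(q:ℚ_[p]) - α m‖ ≤ ‖ξ - (α m:ℚ_[p])‖ :=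
        le_trans (diff_le_max p ξ _ _) (max_le hDm le_rfl)
      have hsep := lsep q (α m) hqne
      have hdpos : 0 < ‖(q:ℚ_[p]) - α m‖ := by
        apply norm_pos_iff.mpr
        intro h0
        exact hqne (by exact_mod_cast sub_eq_zero.mp h0)
      have g1 : Real.log ‖(q:ℚ_[p]) - α m‖ ≤ Real.log c₂ - (1+δ) * Real.log (β m) := by
        have := (Real.log_le_log_iff hdpos (hD0 m)).mpr hdmax
        linarith only [this, lup m]
      have g1' : δ * Real.log (β m) ≤ L₂ + Real.log (ratHeight q) := by
        rw [hL₂]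
        linarith only [hsep, g1, lH m]
      have g2 : Real.log c₁ - (1+ρ) * (Real.log c₀ + θ * Real.log (β m))
          ≤ -(w+1) * Real.log (ratHeight q) := by
        have h1 : Real.log ‖ξ - (α (m+1):ℚ_[p])‖ ≤ Real.log ‖ξ - (q:ℚ_[p])‖ :=
          le_of_lt ((Real.log_lt_log_iff (hD0 _) hDq).mpr hspec)
        have h2 := llow (m+1)
        have h4 := mul_le_mul_of_nonneg_left (lgrow m) (by linarith : (0:ℝ) ≤ 1+ρ)
        linarith only [h1, h2, h4, hmem]
      have s2 := mul_le_mul_of_nonneg_left g1' (by positivity : (0:ℝ) ≤ (1+ρ) * θ)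
      have s3 := mul_le_mul_of_nonneg_left g2 hδ.le
      have hfin : (δ * (w+1) - (1+ρ) * θ) * Real.log (ratHeight q)
          ≤ (1+ρ) * θ * L₂ - δ * Real.log c₁ + δ * (1+ρ) * Real.log c₀ := by
        linarith only [s2, s3]
      have hle : Real.log (ratHeight q) ≤ C₂ := by
        rw [hC₂]
        exact (le_div_iff₀ he₁).mpr (by linarith only [hfin])
      exact (Real.log_le_iff_le_exp (hHpos q)).mp hle
    have : approxSet ξ w = (approxSet ξ w ∩ Set.range α) ∪ (approxSet ξ w \ Set.range α) :=
      (Set.inter_union_diff _ _).symm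
    rw [this]
    exact hAfin.union hBfin
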